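/- arXiv:1910.08778 — 7 statements merged into one kernel-verified Lean document; each statement's English description precedes it below -/
import Mathlib

section
/- The intersection number of any finite simple graph on n vertices is at most ⌊n²/4⌋. -/
/-- `𝒞` is an edge clique cover of `G`: a family of cliques such that every
edge of `G` is contained in at least one clique of the family. -/
def IsECC {V : Type*} (G : SimpleGraph V) (𝒞 : Finset (Finset V)) : Prop :=
  (∀ C ∈ 𝒞, G.IsClique (C : Set V)) ∧
  ∀ u v : V, G.Adj u v → ∃ C ∈ 𝒞, u ∈ C ∧ v ∈ C

/-- The intersection number of `G`: the minimum number of cliques in an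
edge clique cover of `G`. -/
noncomputable def interNum {V : Type*} (G : SimpleGraph V) : ℕ :=
  sInf {n | ∃ 𝒞 : Finset (Finset V), IsECC G 𝒞 ∧ 𝒞.card = n}

open Classical in
lemma cover_aux {V : Type*} [DecidableEq V] (G : SimpleGraph V) (s : Finset V) :
    ∃ 𝒞 : Finset (Finset V), (∀ C ∈ 𝒞, G.IsClique (C : Set V)) ∧
      (∀ u v, u ∈ s → v ∈ s → G.Adj u v → ∃ C ∈ 𝒞, u ∈ C ∧ v ∈ C) ∧
      𝒞.card ≤ s.card ^ 2 / 4 := by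
  induction s using Finset.strongInduction with
  | _ s ih =>
    by_cases hE : ∃ u ∈ s, ∃ v ∈ s, G.Adj u v
    · obtain ⟨u, hu, v, hv, huv⟩ := hE
      have hne : u ≠ v := huv.ne
      set s' := (s.erase u).erase v with hs'
      have hv' : v ∈ s.erase u := Finset.mem_erase.2 ⟨hne.symm, hv⟩
      have hss : s' ⊂ s :=
        (Finset.erase_ssubset hv').trans_subset (Finset.erase_subset _ _)
      obtain ⟨𝒞', h1, h2, h3⟩ := ih s' hss
      set f : V → Finset V := fun w =>
        if G.Adj u w then (if G.Adj v w then {u, v, w} else {u, w})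
        else if G.Adj v w then {v, w} else {w} with hf
      have hwf : ∀ w, w ∈ f w := by
        intro w; simp only [hf]; split_ifs <;> simp
      have huf : ∀ w, G.Adj u w → u ∈ f w := by
        intro w h; simp only [hf]; split_ifs <;> simp_all
      have hvf : ∀ w, G.Adj v w → v ∈ f w := by
        intro w h; simp only [hf]; split_ifs <;> simp_all
      have hcf : ∀ w, G.IsClique ((f w : Finset V) : Set V) := by
        intro w; simp only [hf]; split_ifs with hA hB hC
        all_goals {
          intro a ha b hb hab
          simp only [Finset.coe_insert, Set.mem_insert_iff, Finset.coe_singleton,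
            Set.mem_singleton_iff] at ha hb
          rcases ha with rfl | rfl | rfl <;> rcases hb with rfl | rfl | rfl <;>
            first
              | exact absurd rfl hab
              | assumption
              | exact huv.symm
              | exact hA.symm
              | exact hB.symm
              | exact hC.symm }
      refine ⟨insert {u, v} (𝒞' ∪ s'.image f), ?_, ?_, ?_⟩
      · intro C hC
        rcases Finset.mem_insert.1 hC with rfl | hC
        · intro a ha b hb hab
          simp only [Finset.coe_insert, Set.mem_insert_iff, Finset.coe_singleton,
            Set.mem_singleton_iff] at ha hb
          rcases ha with rfl | rfl <;> rcases hb with rfl | rfl <;>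
            first | exact absurd rfl hab | exact huv | exact huv.symm
        rcases Finset.mem_union.1 hC with hC | hC
        · exact h1 C hC
        · obtain ⟨w, _, rfl⟩ := Finset.mem_image.1 hC
          exact hcf w
      · intro a b ha hb hab
        have hmem : ∀ x, x ∈ s → x = u ∨ x = v ∨ x ∈ s' := by
          intro x hx
          by_cases h1 : x = u
          · exact Or.inl h1
          by_cases h2 : x = v
          · exact Or.inr (Or.inl h2)
          · exact Or.inr (Or.inr (Finset.mem_erase.2 ⟨h2, Finset.mem_erase.2 ⟨h1, hx⟩⟩))
        have key : ∀ C, C ∈ 𝒞' ∪ s'.image f → C ∈ insert {u, v} (𝒞' ∪ s'.image f) :=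
          fun C hC => Finset.mem_insert_of_mem hC
        rcases hmem a ha with rfl | rfl | ha' <;> rcases hmem b hb with rfl | rfl | hb'
        · exact absurd rfl hab.ne
        · exact ⟨_, Finset.mem_insert_self _ _, by simp, by simp⟩
        · exact ⟨f b, key _ (Finset.mem_union_right _ (Finset.mem_image_of_mem f hb')),
            huf b hab, hwf b⟩
        · exact ⟨_, Finset.mem_insert_self _ _, by simp, by simp⟩
        · exact absurd rfl hab.ne
        · exact ⟨f b, key _ (Finset.mem_union_right _ (Finset.mem_image_of_mem f hb')),
            hvf b hab, hwf b⟩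
        · exact ⟨f a, key _ (Finset.mem_union_right _ (Finset.mem_image_of_mem f ha')),
            hwf a, huf a hab.symm⟩
        · exact ⟨f a, key _ (Finset.mem_union_right _ (Finset.mem_image_of_mem f ha')),
            hwf a, hvf a hab.symm⟩
        · obtain ⟨C, hC, hCa, hCb⟩ := h2 a b ha' hb' hab
          exact ⟨C, key _ (Finset.mem_union_left _ hC), hCa, hCb⟩
      · have hcards' : s'.card = s.card - 2 := by
          simp only [hs']
          rw [Finset.card_erase_of_mem hv', Finset.card_erase_of_mem hu]
          omega
        have hn2 : 2 ≤ s.card := by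
          have := Finset.one_lt_card.2 ⟨u, hu, v, hv, hne⟩
          omega
        calc (insert {u, v} (𝒞' ∪ s'.image f)).card
            ≤ (𝒞' ∪ s'.image f).card + 1 := Finset.card_insert_le _ _
          _ ≤ (𝒞'.card + (s'.image f).card) + 1 := by
              have := Finset.card_union_le 𝒞' (s'.image f); omega
          _ ≤ (s'.card ^ 2 / 4 + s'.card) + 1 := by
              have := Finset.card_image_le (s := s') (f := f); omega
          _ ≤ s.card ^ 2 / 4 := by
              obtain ⟨m, hm⟩ : ∃ m, s.card = m + 2 := ⟨s.card - 2, by omega⟩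
              have h4 : s.card ^ 2 = m ^ 2 + 4 * (m + 1) := by rw [hm]; ring
              rw [h4, hcards', hm]
              simp only [Nat.add_sub_cancel]
              rw [Nat.add_mul_div_left _ _ (by norm_num : (0:ℕ) < 4)]
              omega
    · push_neg at hE
      exact ⟨∅, by simp, fun a b ha hb hab => absurd hab (hE a ha b hb), by simp⟩


/-- Erdős–Goodman–Pósa: the intersection number of a graph on `n` vertices is
at most `⌊n²/4⌋`. -/
theorem interNum_le_sq_div_four {V : Type*} [Fintype V] [DecidableEq V] (G : SimpleGraph V) :
    interNum G ≤ Fintype.card V ^ 2 / 4 := by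
  obtain ⟨𝒞, h1, h2, h3⟩ := cover_aux G Finset.univ
  have hECC : IsECC G 𝒞 := ⟨h1, fun a b hab => h2 a b (Finset.mem_univ a) (Finset.mem_univ b) hab⟩
  have := Nat.sInf_le (s := {n | ∃ 𝒞' : Finset (Finset V), IsECC G 𝒞' ∧ 𝒞'.card = n}) ⟨𝒞, hECC, rfl⟩
  simpa [interNum, Finset.card_univ] using this.trans (by simpa [Finset.card_univ] using h3)
end

section
/- Let G be the graph on vertices {1,2,3,4,5,6} whose edges are the 6-cycle 1-2-3-4-5-6-1 together with the chord {2,5}. Then G is triangle-free and its intersection number is 7; in particular, the minimum number of cliques in an edge clique cover of G exceeds the number of vertices of G. -/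
/-- The 6-cycle 1-2-3-4-5-6-1 with chord {2,5}, on vertices `Fin 6`
(vertex `i` standing for `i+1`). -/
def sixCycleChord : SimpleGraph (Fin 6) :=
  SimpleGraph.fromRel (fun a b =>
    (a, b) ∈ [((0 : Fin 6), (1 : Fin 6)), (1, 2), (2, 3), (3, 4), (4, 5), (5, 0), (1, 4)])

instance : DecidableRel sixCycleChord.Adj := fun a b =>
  decidable_of_iff (a ≠ b ∧ ((a, b) ∈ [((0 : Fin 6), (1 : Fin 6)), (1, 2), (2, 3), (3, 4), (4, 5), (5, 0), (1, 4)] ∨ (b, a) ∈ [((0 : Fin 6), (1 : Fin 6)), (1, 2), (2, 3), (3, 4), (4, 5), (5, 0), (1, 4)])) Iff.rfl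

lemma scc_cliqueFree : sixCycleChord.CliqueFree 3 := by
  unfold SimpleGraph.CliqueFree; decide

lemma scc_clique_card {C : Finset (Fin 6)} (h : sixCycleChord.IsClique (C : Set (Fin 6))) :
    C.card ≤ 2 := by
  by_contra hc
  push_neg at hc
  obtain ⟨D, hDC, hD⟩ := C.exists_subset_card_eq hc
  exact scc_cliqueFree D ⟨h.subset (by exact_mod_cast hDC), hD⟩

lemma key {u v u' v' : Fin 6} {C : Finset (Fin 6)}
    (hC : sixCycleChord.IsClique (C : Set (Fin 6)))
    (huv : sixCycleChord.Adj u v) (huv' : sixCycleChord.Adj u' v')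
    (hu : u ∈ C) (hv : v ∈ C) (hu' : u' ∈ C) (hv' : v' ∈ C) :
    s(u, v) = s(u', v') := by
  have h2 := scc_clique_card hC
  have hne := huv.ne
  have hne' := huv'.ne
  have hCeq : C = {u, v} := by
    refine (Finset.eq_of_subset_of_card_le (fun x hx => ?_) ?_).symm
    · rcases Finset.mem_insert.mp hx with h | h
      · exact h ▸ hu
      · exact (Finset.mem_singleton.mp h) ▸ hv
    · rwa [Finset.card_insert_of_notMem (by simpa using hne), Finset.card_singleton]
  subst hCeq
  simp only [Finset.mem_insert, Finset.mem_singleton] at hu' hv'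
  rw [Sym2.eq_iff]
  rcases hu' with rfl | rfl <;> rcases hv' with rfl | rfl <;> simp_all

def myCover : Finset (Finset (Fin 6)) :=
  {{0, 1}, {1, 2}, {2, 3}, {3, 4}, {4, 5}, {5, 0}, {1, 4}}

lemma myCover_isECC : IsECC sixCycleChord myCover := by
  unfold IsECC myCover; decide

lemma myCover_card : myCover.card = 7 := by decide

lemma lower_bound {𝒞 : Finset (Finset (Fin 6))} (h : IsECC sixCycleChord 𝒞) :
    7 ≤ 𝒞.card := by
  classical
  obtain ⟨hclique, hcov⟩ := h
  set E := sixCycleChord.edgeFinset with hE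
  have hEcard : E.card = 7 := by decide
  -- map each edge to a clique containing it
  have hex : ∀ e ∈ E, ∃ C ∈ 𝒞, ∀ x ∈ e, x ∈ C := by
    intro e he
    induction e with
    | _ u v =>
      rw [SimpleGraph.mem_edgeFinset, SimpleGraph.mem_edgeSet] at he
      obtain ⟨C, hC, hu, hv⟩ := hcov u v he
      exact ⟨C, hC, fun x hx => by rcases Sym2.mem_iff.mp hx with rfl | rfl <;> assumption⟩
  choose! f hf1 hf2 using hex
  rw [← hEcard]
  apply Finset.card_le_card_of_injOn f (fun e he => hf1 e he)
  intro e1 he1 e2 he2 hfe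
  simp only [Finset.mem_coe] at he1 he2
  induction e1 with
  | _ u v =>
    induction e2 with
    | _ u' v' =>
      have h1 : sixCycleChord.Adj u v := by
        rw [SimpleGraph.mem_edgeFinset, SimpleGraph.mem_edgeSet] at he1; exact he1
      have h2 : sixCycleChord.Adj u' v' := by
        rw [SimpleGraph.mem_edgeFinset, SimpleGraph.mem_edgeSet] at he2; exact he2
      have hu := hf2 _ he1 u (Sym2.mem_mk_left u v)
      have hv := hf2 _ he1 v (Sym2.mem_mk_right u v)
      have hu' := hf2 _ he2 u' (Sym2.mem_mk_left u' v')
      have hv' := hf2 _ he2 v' (Sym2.mem_mk_right u' v')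
      rw [hfe] at hu hv
      exact key (hclique _ (hf1 _ he2)) h1 h2 hu hv hu' hv'

/-- The 6-cycle with a long chord is triangle-free, has intersection number 7,
and in particular its intersection number exceeds its number of vertices. -/
theorem sixCycleChord_interNum :
    sixCycleChord.CliqueFree 3 ∧ interNum sixCycleChord = 7 ∧
      Fintype.card (Fin 6) < interNum sixCycleChord := by
  have h7 : interNum sixCycleChord = 7 := by
    apply le_antisymm
    · exact Nat.sInf_le ⟨myCover, myCover_isECC, myCover_card⟩
    · have hne : Set.Nonempty {n | ∃ 𝒞 : Finset (Finset (Fin 6)), IsECC sixCycleChord 𝒞 ∧ 𝒞.card = n} :=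
        ⟨7, myCover, myCover_isECC, myCover_card⟩
      apply le_csInf hne
      rintro n ⟨𝒞, h𝒞, rfl⟩
      exact lower_bound h𝒞
  exact ⟨scc_cliqueFree, h7, by rw [h7]; simp⟩
end

section
/- In a MeDIL causal model, for measurement vertices M_i, M_j, M_k: if M_i and M_j are d-connected given the empty set, then M_i and M_j are d-connected given {M_k}. -/
/-- Skeleton adjacency of a directed graph given by edge relation `E`. -/
def SkelAdj {V : Type*} (E : V → V → Prop) (a b : V) : Prop := E a b ∨ E b a

/-- A path (in the skeleton) of the directed graph `E` is blocked by the
conditioning set `Z` if it contains an internal vertex `v` (with neighbors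
`a`, `b` on the path) which is either a collider (both path edges point into
`v`) none of whose descendants lies in `Z`, or a non-collider lying in `Z`. -/
def Blocked {V : Type*} (E : V → V → Prop) (Z : Set V) (p : List V) : Prop :=
  ∃ a v b : V, List.IsInfix [a, v, b] p ∧
    ((E a v ∧ E b v ∧ ∀ d, Relation.ReflTransGen E v d → d ∉ Z) ∨
     (¬(E a v ∧ E b v) ∧ v ∈ Z))

/-- `x` and `y` are d-connected given `Z` in the directed graph `E` if there is
an unblocked (repetition-free) skeleton path from `x` to `y`. -/
def DConn {V : Type*} (E : V → V → Prop) (Z : Set V) (x y : V) : Prop :=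
  ∃ p : List V, p.Chain' (SkelAdj E) ∧ p.Nodup ∧
    p.head? = some x ∧ p.getLast? = some y ∧ ¬ Blocked E Z p

/-- A measurement dependence inducing latent (MeDIL) causal model: a DAG whose
vertices are partitioned into latents `L` (out-degree ≥ 1) and measurements `M`
(out-degree 0, in-degree ≥ 1). -/
structure MCM (V : Type*) where
  E : V → V → Prop
  L : Set V
  M : Set V
  disjoint : Disjoint L M
  union : L ∪ M = Set.univ
  acyclic : ∀ v : V, ¬ Relation.TransGen E v v
  meas_sink : ∀ m ∈ M, ∀ v, ¬ E m v
  meas_indeg : ∀ m ∈ M, ∃ v, E v m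
  lat_outdeg : ∀ l ∈ L, ∃ v, E l v

/-- In a MeDIL causal model, if measurement vertices `Mi` and `Mj` are
d-connected given the empty set, then they are d-connected given `{Mk}` for any
measurement vertex `Mk`. -/
theorem dconn_empty_imp_dconn_singleton {V : Type*} (G : MCM V) (Mi Mj Mk : V)
    (hi : Mi ∈ G.M) (hj : Mj ∈ G.M) (hk : Mk ∈ G.M)
    (hij : Mi ≠ Mj) (hik : Mi ≠ Mk) (hjk : Mj ≠ Mk)
    (h : DConn G.E ∅ Mi Mj) :
    DConn G.E {Mk} Mi Mj := by
  obtain ⟨p, hchain, hnd, hhd, htl, hnb⟩ := h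
  refine ⟨p, hchain, hnd, hhd, htl, ?_⟩
  rintro ⟨a, v, b, hinf, hcase⟩
  have hch3 : List.Chain' (SkelAdj G.E) [a, v, b] := hchain.infix hinf
  rcases hcase with ⟨hav, hbv, _⟩ | ⟨hnc, hvZ⟩
  · exact hnb ⟨a, v, b, hinf, Or.inl ⟨hav, hbv, fun d _ => Set.notMem_empty d⟩⟩
  · have hv : v = Mk := hvZ
    have h1 : SkelAdj G.E a v := (List.isChain_cons_cons.mp hch3).1
    have h2 : SkelAdj G.E v b := (List.isChain_cons_cons.mp (List.isChain_cons_cons.mp hch3).2).1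
    have hav : G.E a v := h1.resolve_right (hv ▸ G.meas_sink Mk hk a)
    have hbv : G.E b v := h2.resolve_left (hv ▸ G.meas_sink Mk hk b)
    exact hnc ⟨hav, hbv⟩
end

section
/- In a MeDIL causal model, for measurement vertices M_i, M_j, M_k: if M_i ⊥ M_j (d-separated given ∅) but M_i is d-connected to M_k given ∅ and M_j is d-connected to M_k given ∅, then M_i and M_j are d-connected given {M_k}. -/
lemma triple_infix_iff {V : Type*} {a v b : V} {l : List V} :
    [a, v, b] <:+: l ↔ ∃ n, l[n]? = some a ∧ l[n+1]? = some v ∧ l[n+2]? = some b := by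
  constructor
  · rintro ⟨s, t, rfl⟩
    refine ⟨s.length, ?_, ?_, ?_⟩ <;>
      · rw [List.append_assoc, List.getElem?_append_right (by omega)]
        simp
  · rintro ⟨n, ha, hv, hb⟩
    obtain ⟨hlt, ha'⟩ := List.getElem?_eq_some_iff.mp ha
    obtain ⟨hlt1, hv'⟩ := List.getElem?_eq_some_iff.mp hv
    obtain ⟨hlt2, hb'⟩ := List.getElem?_eq_some_iff.mp hb
    refine ⟨l.take n, l.drop (n+3), ?_⟩
    have h1 : l.drop n = a :: l.drop (n+1) := by
      rw [List.drop_eq_getElem_cons hlt, ha']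
    have h2 : l.drop (n+1) = v :: l.drop (n+2) := by
      rw [List.drop_eq_getElem_cons hlt1, hv']
    have h3 : l.drop (n+2) = b :: l.drop (n+3) := by
      rw [List.drop_eq_getElem_cons hlt2, hb']
    calc l.take n ++ [a, v, b] ++ l.drop (n+3)
        = l.take n ++ (a :: v :: b :: l.drop (n+3)) := by simp
      _ = l.take n ++ l.drop n := by rw [h1, h2, h3]
      _ = l := List.take_append_drop n l

lemma reach_last {V : Type*} {E : V → V → Prop} :
    ∀ (l : List V) (a w y : V),
      List.Chain' (SkelAdj E) (a :: w :: l) →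
      (∀ x u z : V, [x, u, z] <:+: (a :: w :: l) → ¬(E x u ∧ E z u)) →
      E a w → (a :: w :: l).getLast? = some y →
      Relation.ReflTransGen E w y := by
  intro l
  induction l with
  | nil =>
    intro a w y _ _ _ hy
    simp at hy
    exact hy ▸ Relation.ReflTransGen.refl
  | cons c t ih =>
    intro a w y hch hnc haw hy
    have h2 : List.Chain' (SkelAdj E) (w :: c :: t) := (List.isChain_cons_cons.mp hch).2
    have hwc : SkelAdj E w c := (List.isChain_cons_cons.mp h2).1
    have hEwc : E w c := by
      rcases hwc with h | h
      · exact h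
      · exact absurd ⟨haw, h⟩ (hnc a w c ⟨[], t, rfl⟩)
    have hsuf : (w :: c :: t) <:+ (a :: w :: c :: t) := List.suffix_cons a _
    have := ih w c y h2
      (fun x u z hin => hnc x u z (hin.trans hsuf.isInfix))
      hEwc (by rw [← hy]; simp [List.getLast?_cons_cons])
    exact Relation.ReflTransGen.head hEwc this

lemma dropWhile_head_false {V : Type*} (pr : V → Bool) :
    ∀ (l : List V) (w : V) (t : List V), l.dropWhile pr = w :: t → pr w = false := by
  intro l w t h
  have := List.head?_dropWhile_not pr l
  rw [h] at this
  simpa using this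


/-- In a MeDIL causal model, if `Mi ⊥ Mj` given `∅` but both `Mi` and `Mj` are
d-connected to `Mk` given `∅`, then `Mi` and `Mj` are d-connected given `{Mk}`. -/
theorem dconn_given_collider {V : Type*} (G : MCM V) (Mi Mj Mk : V)
    (hi : Mi ∈ G.M) (hj : Mj ∈ G.M) (hk : Mk ∈ G.M)
    (hij : Mi ≠ Mj) (hik : Mi ≠ Mk) (hjk : Mj ≠ Mk)
    (hsep : ¬ DConn G.E ∅ Mi Mj)
    (hik' : DConn G.E ∅ Mi Mk) (hjk' : DConn G.E ∅ Mj Mk) :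
    DConn G.E {Mk} Mi Mj := by
  classical
  obtain ⟨p, pch, pnd, phd, plt, pnb⟩ := hik'
  obtain ⟨q, qch, qnd, qhd, qlt, qnb⟩ := hjk'
  have pcol : ∀ a v b : V, [a, v, b] <:+: p → ¬(G.E a v ∧ G.E b v) := by
    intro a v b hin hc
    exact pnb ⟨a, v, b, hin, Or.inl ⟨hc.1, hc.2, fun d _ => Set.notMem_empty d⟩⟩
  have qcol : ∀ a v b : V, [a, v, b] <:+: q → ¬(G.E a v ∧ G.E b v) := by
    intro a v b hin hc
    exact qnb ⟨a, v, b, hin, Or.inl ⟨hc.1, hc.2, fun d _ => Set.notMem_empty d⟩⟩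
  have hMkp : Mk ∈ p := List.mem_of_mem_getLast? (by simp [plt])
  have hMkq : Mk ∈ q := List.mem_of_mem_getLast? (by simp [qlt])
  set pr : V → Bool := fun x => decide (x ∉ q) with hpr
  set p1 := p.takeWhile pr with hp1
  obtain ⟨w, p2, hpd⟩ : ∃ w p2, p.dropWhile pr = w :: p2 := by
    cases hd : p.dropWhile pr with
    | nil =>
      have := List.dropWhile_eq_nil_iff.mp hd Mk hMkp
      simp [hpr] at this
      exact absurd hMkq this
    | cons w p2 => exact ⟨w, p2, rfl⟩
  have hwq : w ∈ q := by
    have := dropWhile_head_false pr p w p2 hpd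
    simpa [hpr] using this
  have hmemp1 : ∀ x ∈ p1, x ∉ q := by
    intro x hx
    have := List.mem_takeWhile_imp (hp1 ▸ hx)
    simpa [hpr] using this
  have hp : p = p1 ++ w :: p2 := by
    rw [← hpd, hp1]
    exact (List.takeWhile_append_dropWhile (p := pr) (l := p)).symm
  obtain ⟨q1, q2, hq⟩ := List.append_of_mem hwq
  have hpnd2 : (p1 ++ w :: p2).Nodup := hp ▸ pnd
  have hqnd2 : (q1 ++ w :: q2).Nodup := hq ▸ qnd
  have hdisj_q : List.Disjoint q1 (w :: q2) := List.disjoint_of_nodup_append hqnd2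
  have hwq1 : w ∉ q1 := fun h => hdisj_q h List.mem_cons_self
  set r := p1 ++ w :: q1.reverse with hr
  -- chain
  have hqpre : (q1 ++ [w]).Chain' (SkelAdj G.E) := qch.infix ⟨[], q2, by simp [hq]⟩
  have hrev : (w :: q1.reverse).Chain' (SkelAdj G.E) := by
    have h1 : ((q1 ++ [w]).reverse).Chain' (SkelAdj G.E) := by
      unfold List.Chain'
      rw [List.isChain_reverse]
      exact hqpre.imp (fun _ _ h => Or.symm h)
    simpa using h1
  have hppre : p1.Chain' (SkelAdj G.E) :=
    pch.infix (List.IsPrefix.isInfix ⟨w :: p2, hp.symm⟩)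
  have hchain : r.Chain' (SkelAdj G.E) := by
    unfold List.Chain'
    rw [hr, List.isChain_append]
    refine ⟨hppre, hrev, ?_⟩
    intro x hx y hy
    simp only [List.head?_cons, Option.mem_some_iff] at hy
    subst hy
    exact (List.isChain_append.mp (hp ▸ pch)).2.2 x hx w (by simp)
  -- nodup
  have hnodup : r.Nodup := by
    rw [hr, List.nodup_append']
    refine ⟨(List.nodup_append.mp hpnd2).1, ?_, ?_⟩
    · exact List.nodup_cons.mpr ⟨by simpa using hwq1,
        by simpa using (List.nodup_append.mp hqnd2).1⟩
    · intro x hx hmem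
      rcases List.mem_cons.mp hmem with rfl | h
      · exact hmemp1 x hx hwq
      · exact hmemp1 x hx (by rw [hq]; exact List.mem_append_left _ (List.mem_reverse.mp h))
  -- head
  have hhead : r.head? = some Mi := by
    rw [hr]
    cases hp1e : p1 with
    | nil =>
      have hpw : p = w :: p2 := by rw [hp, hp1e]; rfl
      have hw : w = Mi := by rw [hpw] at phd; simpa using phd
      simp [hw]
    | cons x t =>
      have hx : p.head? = some x := by rw [hp, hp1e]; rfl
      rw [phd] at hx
      injection hx with hx
      simp [hx]
  -- last
  have hlast : r.getLast? = some Mj := by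
    rw [hr, List.getLast?_append_of_ne_nil p1 (List.cons_ne_nil _ _)]
    cases hq1e : q1 with
    | nil =>
      have hqw : q = w :: q2 := by rw [hq, hq1e]; rfl
      have hw : w = Mj := by rw [hqw] at qhd; simpa using qhd
      simp [hw]
    | cons x t =>
      have hx : q.head? = some x := by rw [hq, hq1e]; rfl
      rw [qhd] at hx
      injection hx with hx
      have he : w :: (x :: t).reverse = (w :: t.reverse) ++ [x] := by simp
      rw [he, List.getLast?_concat, hx]
  refine ⟨r, hchain, hnodup, hhead, hlast, ?_⟩
  -- unblocked
  rintro ⟨a, v, b, hinf, hcase⟩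
  have hch3 : [a, v, b].Chain' (SkelAdj G.E) := hchain.infix hinf
  have hav : SkelAdj G.E a v := (List.isChain_cons_cons.mp hch3).1
  have hvb : SkelAdj G.E v b := (List.isChain_cons_cons.mp (List.isChain_cons_cons.mp hch3).2).1
  rcases hcase with ⟨hEa, hEb, hdesc⟩ | ⟨hnc, hv⟩
  · -- collider
    obtain ⟨n, ha, hvv, hb⟩ := triple_infix_iff.mp hinf
    have hrk : r[p1.length]? = some w := by
      rw [hr, List.getElem?_append_right (le_refl _)]
      simp
    rcases (by omega : n + 2 ≤ p1.length ∨ n + 1 = p1.length ∨ p1.length ≤ n) with hA | hB | hC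
    · -- within the p-part
      have hagree : ∀ i, i ≤ p1.length → r[i]? = p[i]? := by
        intro i hi
        have hi' : i < (p1 ++ [w]).length := by simp; omega
        rw [hr, show p1 ++ w :: q1.reverse = (p1 ++ [w]) ++ q1.reverse by simp,
          List.getElem?_append_left hi', hp,
          show p1 ++ w :: p2 = (p1 ++ [w]) ++ p2 by simp,
          List.getElem?_append_left hi']
      refine pcol a v b (triple_infix_iff.mpr ⟨n, ?_, ?_, ?_⟩) ⟨hEa, hEb⟩
      · rw [← hagree n (by omega)]; exact ha
      · rw [← hagree (n+1) (by omega)]; exact hvv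
      · rw [← hagree (n+2) (by omega)]; exact hb
    · -- centered at w
      have hvw : v = w := by
        rw [hB, hrk] at hvv
        injection hvv with h
        exact h.symm
      have hpa : p1[n]? = some a := by
        rw [hr, List.getElem?_append_left (by omega)] at ha
        exact ha
      have hlastp1 : p1.getLast? = some a := by
        rw [List.getLast?_eq_getElem?, show p1.length - 1 = n by omega]
        exact hpa
      obtain ⟨p1', hp1'⟩ := List.getLast?_eq_some_iff.mp hlastp1
      have hsuf : (a :: w :: p2) <:+ p := ⟨p1', by rw [hp, hp1']; simp⟩
      have hlast3 : (a :: w :: p2).getLast? = some Mk := by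
        have h1 : p.getLast? = (a :: w :: p2).getLast? := by
          conv_lhs => rw [show p = p1' ++ (a :: w :: p2) by rw [hp, hp1']; simp]
          exact List.getLast?_append_of_ne_nil _ (List.cons_ne_nil _ _)
        rw [← h1]; exact plt
      have hreach : Relation.ReflTransGen G.E w Mk :=
        reach_last p2 a w Mk (pch.infix hsuf.isInfix)
          (fun x u z hin => pcol x u z (hin.trans hsuf.isInfix))
          (hvw ▸ hEa) hlast3
      exact hdesc Mk (by rw [hvw]; exact hreach) rfl
    · -- within the q-part
      have hgd : ∀ j, r[p1.length + j]? = (w :: q1.reverse)[j]? := by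
        intro j
        rw [hr, List.getElem?_append_right (by omega)]
        congr 1
        omega
      have h1 : (w :: q1.reverse)[n - p1.length]? = some a := by
        rw [← hgd, show p1.length + (n - p1.length) = n by omega]; exact ha
      have h2 : (w :: q1.reverse)[n - p1.length + 1]? = some v := by
        rw [← hgd, show p1.length + (n - p1.length + 1) = n + 1 by omega]; exact hvv
      have h3 : (w :: q1.reverse)[n - p1.length + 2]? = some b := by
        rw [← hgd, show p1.length + (n - p1.length + 2) = n + 2 by omega]; exact hb
      have htr : [a, v, b] <:+: (w :: q1.reverse) :=
        triple_infix_iff.mpr ⟨n - p1.length, h1, h2, h3⟩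
      have htr' : [b, v, a] <:+: (q1 ++ [w]) := by
        rw [show w :: q1.reverse = (q1 ++ [w]).reverse by simp] at htr
        exact List.reverse_infix.mp (by simpa using htr)
      exact qcol b v a
        (htr'.trans (List.IsPrefix.isInfix ⟨q2, by rw [hq]; simp⟩)) ⟨hEb, hEa⟩
  · -- non-collider at Mk is impossible: Mk is a sink
    have hvMk : v = Mk := hv
    subst hvMk
    have hEav : G.E a v := by
      rcases hav with h | h
      · exact h
      · exact absurd h (G.meas_sink v hk a)
    have hEbv : G.E b v := by
      rcases hvb with h | h
      · exact absurd h (G.meas_sink v hk b)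
      · exact h
    exact hnc ⟨hEav, hEbv⟩
end

section
/- In a MeDIL causal model, for measurement vertices M_i, M_j, M_k: if M_i is d-separated from M_j given ∅ and M_i is d-separated from M_k given ∅, then M_i is d-separated from M_j given {M_k}. -/
section Aux
variable {V : Type*} {E : V → V → Prop}

def NoColl (E : V → V → Prop) (p : List V) : Prop :=
  ∀ a v b, [a, v, b] <:+: p → ¬(E a v ∧ E b v)

lemma NoColl.infix {p q : List V} (h : NoColl E p) (hq : q <:+: p) : NoColl E q :=
  fun a v b hi => h a v b (hi.trans hq)

lemma exists_dir_path {w x : V} (h : Relation.ReflTransGen E w x) :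
    ∃ P : List V, P.Chain' E ∧ P.Nodup ∧ P.head? = some w ∧ P.getLast? = some x := by
  induction h using Relation.ReflTransGen.head_induction_on with
  | refl => exact ⟨[x], List.isChain_singleton x, by simp, by simp, by simp⟩
  | @head a c h' h ih =>
    obtain ⟨P, hc, hn, hh, hl⟩ := ih
    by_cases hm : a ∈ P
    · obtain ⟨s, t, rfl⟩ := List.append_of_mem hm
      have hsuf : (a :: t) <:+ s ++ a :: t := List.suffix_append s (a :: t)
      refine ⟨a :: t, hc.infix hsuf.isInfix, hn.sublist hsuf.sublist, rfl, ?_⟩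
      rw [List.getLast?_append] at hl
      cases ht : (a :: t).getLast? with
      | none => simp at ht
      | some z => rw [ht] at hl; simp at hl; rw [hl]
    · cases P with
      | nil => simp at hh
      | cons p0 P' =>
        have hp0 : p0 = c := by simpa using hh
        subst hp0
        refine ⟨a :: p0 :: P', List.isChain_cons_cons.mpr ⟨h', hc⟩,
          List.nodup_cons.mpr ⟨hm, hn⟩, rfl, by rw [List.getLast?_cons_cons]; exact hl⟩

/-- a good path to `y`: collider-free, nodup skeleton path ending at `y`. -/
def Good (E : V → V → Prop) (y : V) (S : List V) : Prop :=
  S.Chain' (SkelAdj E) ∧ S.Nodup ∧ NoColl E S ∧ S.getLast? = some y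

lemma noColl_of_dir (acyc : ∀ v, ¬ Relation.TransGen E v v) {Q : List V}
    (hQ : Q.Chain' E) : NoColl E Q := by
  rintro a v b hi ⟨hav, hbv⟩
  have h3 := hQ.infix hi
  have hvb : E v b := (List.isChain_cons_cons.mp (List.isChain_cons_cons.mp h3).2).1
  exact acyc v ((Relation.TransGen.single hvb).tail hbv)

lemma good_suffix_at {S : List V} {y v : V} (hg : Good E y S) (hm : v ∈ S) :
    ∃ S', Good E y S' ∧ S'.head? = some v := by
  obtain ⟨s, t, rfl⟩ := List.append_of_mem hm
  have hsuf : (v :: t) <:+ s ++ v :: t := List.suffix_append s (v :: t)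
  refine ⟨v :: t, ⟨hg.1.infix hsuf.isInfix, hg.2.1.sublist hsuf.sublist,
    hg.2.2.1.infix hsuf.isInfix, ?_⟩, rfl⟩
  have hl := hg.2.2.2
  rw [List.getLast?_append] at hl
  cases ht : (v :: t).getLast? with
  | none => simp at ht
  | some z => rw [ht] at hl; simp at hl; rw [hl]

lemma extend (acyc : ∀ v, ¬ Relation.TransGen E v v) {y : V} :
    ∀ (P : List V) (u x : V), P.Chain' E → P.head? = some u → P.getLast? = some x →
    ∀ S : List V, Good E y S → S.head? = some u →
    ∃ T, Good E y T ∧ T.head? = some x := by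
  intro P
  induction P with
  | nil => intro u x _ hh _ _ _ _; simp at hh
  | cons p P ih =>
    intro u x hc hh hl S hS hSh
    have hpu : p = u := by simpa using hh
    subst hpu
    cases P with
    | nil =>
      have : p = x := by simpa using hl
      exact ⟨S, hS, by rw [hSh, this]⟩
    | cons q P' =>
      have hpq : E p q := (List.isChain_cons_cons.mp hc).1
      have hl' : (q :: P').getLast? = some x := by
        rw [List.getLast?_cons_cons] at hl; exact hl
      by_cases hq : q ∈ S
      · obtain ⟨S', hS', hh'⟩ := good_suffix_at hS hq
        exact ih q x (List.isChain_cons_cons.mp hc).2 rfl hl' S' hS' hh'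
      · have hSnn : S ≠ [] := by intro h; rw [h] at hSh; simp at hSh
        obtain ⟨s0, S0, rfl⟩ := List.exists_cons_of_ne_nil hSnn
        have hs0 : s0 = p := by simpa using hSh
        subst hs0
        refine ih q x (List.isChain_cons_cons.mp hc).2 rfl hl' (q :: s0 :: S0)
          ⟨?_, ?_, ?_, ?_⟩ rfl
        · exact List.isChain_cons_cons.mpr ⟨Or.inr hpq, hS.1⟩
        · exact List.nodup_cons.mpr ⟨hq, hS.2.1⟩
        · rintro a v b hi ⟨hav, hbv⟩
          rcases List.infix_cons_iff.mp hi with hpre | hinf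
          · obtain ⟨t, ht⟩ := hpre
            simp only [List.cons_append] at ht
            obtain ⟨rfl, rfl, _⟩ : a = q ∧ v = s0 ∧ b :: t = S0 := by
              injection ht with h1 h2; injection h2 with h2 h3; exact ⟨h1, h2, h3⟩
            exact acyc a ((Relation.TransGen.single hav).tail hpq)
          · exact hS.2.2.1 a v b hinf ⟨hav, hbv⟩
        · rw [List.getLast?_cons_cons]; exact hS.2.2.2

lemma trek_dconn (acyc : ∀ v, ¬ Relation.TransGen E v v) {w x y : V}
    (hx : Relation.ReflTransGen E w x) (hy : Relation.ReflTransGen E w y) :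
    DConn E ∅ x y := by
  obtain ⟨Q, hQc, hQn, hQh, hQl⟩ := exists_dir_path hy
  obtain ⟨P, hPc, _, hPh, hPl⟩ := exists_dir_path hx
  have hQg : Good E y Q := ⟨hQc.imp fun _ _ h => Or.inl h, hQn, noColl_of_dir acyc hQc, hQl⟩
  obtain ⟨T, hTg, hTh⟩ := extend acyc P w x hPc hPh hPl Q hQg hQh
  refine ⟨T, hTg.1, hTg.2.1, hTh, hTg.2.2.2, ?_⟩
  rintro ⟨a, v, b, hi, (⟨h1, h2, _⟩ | ⟨_, hv⟩)⟩
  · exact hTg.2.2.1 a v b hi ⟨h1, h2⟩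
  · exact hv

lemma forward_of_noColl : ∀ (p : List V) (x x' y : V), E x x' →
    (x :: x' :: p).Chain' (SkelAdj E) → NoColl E (x :: x' :: p) →
    (x' :: p).getLast? = some y → Relation.ReflTransGen E x y := by
  intro p
  induction p with
  | nil =>
    intro x x' y h _ _ hl
    have : x' = y := by simpa using hl
    exact Relation.ReflTransGen.single (this ▸ h)
  | cons x'' p ih =>
    intro x x' y h hc hnc hl
    have hadj : SkelAdj E x' x'' := (List.isChain_cons_cons.mp (List.isChain_cons_cons.mp hc).2).1
    have hxx : E x' x'' := by
      rcases hadj with h1 | h1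
      · exact h1
      · exact absurd ⟨h, h1⟩ (hnc x x' x'' ⟨[], p, rfl⟩)
    exact Relation.ReflTransGen.head h
      (ih x' x'' y hxx (List.isChain_cons_cons.mp hc).2
        (hnc.infix ⟨[x], [], by simp⟩)
        (by rw [List.getLast?_cons_cons] at hl; exact hl))

lemma common_ancestor : ∀ (p : List V) (x y : V), p.Chain' (SkelAdj E) → NoColl E p →
    p.head? = some x → p.getLast? = some y →
    ∃ w, Relation.ReflTransGen E w x ∧ Relation.ReflTransGen E w y := by
  intro p
  induction p with
  | nil => intro x y _ _ hh _; simp at hh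
  | cons a p ih =>
    intro x y hc hnc hh hl
    have hax : a = x := by simpa using hh
    subst hax
    cases p with
    | nil =>
      have : a = y := by simpa using hl
      exact ⟨a, Relation.ReflTransGen.refl, this ▸ Relation.ReflTransGen.refl⟩
    | cons x' p' =>
      have hl' : (x' :: p').getLast? = some y := by
        rw [List.getLast?_cons_cons] at hl; exact hl
      rcases (List.isChain_cons_cons.mp hc).1 with h1 | h1
      · exact ⟨a, Relation.ReflTransGen.refl, forward_of_noColl p' a x' y h1 hc hnc hl'⟩
      · obtain ⟨w, hw1, hw2⟩ := ih x' y (List.isChain_cons_cons.mp hc).2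
          (hnc.infix ⟨[a], [], by simp⟩) rfl hl'
        exact ⟨w, hw1.tail h1, hw2⟩

end Aux

/-- In a MeDIL causal model, if `Mi` is d-separated from `Mj` given `∅` and also
d-separated from `Mk` given `∅`, then `Mi` is d-separated from `Mj` given `{Mk}`. -/
theorem dsep_given_singleton {V : Type*} (G : MCM V) (Mi Mj Mk : V)
    (hi : Mi ∈ G.M) (hj : Mj ∈ G.M) (hk : Mk ∈ G.M)
    (hij : Mi ≠ Mj) (hik : Mi ≠ Mk) (hjk : Mj ≠ Mk)
    (hsepj : ¬ DConn G.E ∅ Mi Mj) (hsepk : ¬ DConn G.E ∅ Mi Mk) :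
    ¬ DConn G.E {Mk} Mi Mj := by
  rintro ⟨p, hc, hn, hh, hl, hnb⟩
  by_cases hcol : ∃ s a v b t, p = s ++ a :: v :: b :: t ∧ G.E a v ∧ G.E b v
  · obtain ⟨n, hnS, hmin⟩ := (wellFounded_lt (α := ℕ)).has_min
      {n | ∃ s a v b t, p = s ++ a :: v :: b :: t ∧ G.E a v ∧ G.E b v ∧ s.length = n}
      (by obtain ⟨s, a, v, b, t, h1, h2, h3⟩ := hcol
          exact ⟨s.length, s, a, v, b, t, h1, h2, h3, rfl⟩)
    obtain ⟨s, a, v, b, t, hp, hav, hbv, rfl⟩ := hnS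
    have hinfix : [a, v, b] <:+: p := ⟨s, t, by rw [hp]; simp⟩
    have hvk : Relation.ReflTransGen G.E v Mk := by
      by_contra hvk
      exact hnb ⟨a, v, b, hinfix, Or.inl ⟨hav, hbv, fun d hd hdZ =>
        hvk (Set.mem_singleton_iff.mp hdZ ▸ hd)⟩⟩
    have hq_infix : (s ++ [a, v]) <:+: p := ⟨[], b :: t, by rw [hp]; simp⟩
    have hqc := hc.infix hq_infix
    have hqnc : NoColl G.E (s ++ [a, v]) := by
      rintro a' v' b' ⟨s', t', ht'⟩ hcol'
      refine hmin s'.length ⟨s', a', v', b', t' ++ b :: t, ?_, hcol'.1, hcol'.2, rfl⟩ ?_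
      · have h1 : p = (s ++ [a, v]) ++ (b :: t) := by rw [hp]; simp
        rw [h1, ← ht']; simp
      · have hlen : s'.length + (t'.length + 1 + 1 + 1) = s.length + 2 := by
          simpa using congrArg List.length ht'
        show s'.length < s.length
        omega
    have hqh : (s ++ [a, v]).head? = some Mi := by
      have h1 : p = (s ++ [a, v]) ++ (b :: t) := by rw [hp]; simp
      rw [h1, List.head?_append] at hh
      cases hsh : (s ++ [a, v]).head? with
      | none => rw [List.head?_eq_none_iff] at hsh; simp at hsh
      | some z => rw [hsh] at hh; simp at hh; rw [hh]
    have hql : (s ++ [a, v]).getLast? = some v := by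
      rw [List.getLast?_append]; simp
    obtain ⟨w, hwi, hwv⟩ := common_ancestor (s ++ [a, v]) Mi v hqc hqnc hqh hql
    exact hsepk (trek_dconn G.acyclic hwi (hwv.trans hvk))
  · push_neg at hcol
    refine hsepj ⟨p, hc, hn, hh, hl, ?_⟩
    rintro ⟨a, v, b, ⟨s, t, hst⟩, (⟨h1, h2, _⟩ | ⟨_, hv⟩)⟩
    · exact hcol s a v b t (by rw [← hst]; simp) h1 h2
    · exact Set.notMem_empty v hv
end

section
/- Given a finite simple graph D on vertex set M (the undirected dependency graph) and an edge clique cover 𝒞 of D, construct the bipartite DAG G with vertex set {v_C : C ∈ 𝒞} ∪ M and a directed edge v_C → m iff m ∈ C. Then (assuming D has no isolated vertices and every clique in 𝒞 is nonempty with size ≥ 1) G is a MeDIL causal model, and two measurement vertices m, m' are d-connected in G given ∅ if and only if {m, m'} is an edge of D. -/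
/-- The edge relation of the two-layer DAG built from an edge clique cover `𝒞`
of a graph on `V`: a latent vertex `v_C` for each clique `C ∈ 𝒞`, with a
directed edge `v_C → m` iff `m ∈ C`. -/
def eccEdge {V : Type*} (𝒞 : Finset (Finset V)) :
    ({C // C ∈ 𝒞} ⊕ V) → ({C // C ∈ 𝒞} ⊕ V) → Prop
  | Sum.inl C, Sum.inr m => m ∈ C.1
  | _, _ => False

lemma ecc_no_out {V : Type*} {𝒞 : Finset (Finset V)} (m : V) (x : {C // C ∈ 𝒞} ⊕ V) :
    ¬ eccEdge 𝒞 (Sum.inr m) x := by cases x <;> exact id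

lemma ecc_no_in {V : Type*} {𝒞 : Finset (Finset V)} (C : {C // C ∈ 𝒞}) (x : {C // C ∈ 𝒞} ⊕ V) :
    ¬ eccEdge 𝒞 x (Sum.inl C) := by cases x <;> exact id

/-- Given an edge clique cover `𝒞` of the undirected dependency graph `D`
(with `D` having no isolated vertices and every clique of `𝒞` nonempty), the
two-layer DAG built from `𝒞` is a MeDIL causal model, and two measurement
vertices are d-connected given `∅` in it iff they are adjacent in `D`. -/
theorem ecc_mcm_dconn {V : Type*} [Fintype V] [DecidableEq V]
    (D : SimpleGraph V) (𝒞 : Finset (Finset V))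
    (hclique : ∀ C ∈ 𝒞, D.IsClique (C : Set V))
    (hcover : ∀ u v : V, D.Adj u v → ∃ C ∈ 𝒞, u ∈ C ∧ v ∈ C)
    (hnonempty : ∀ C ∈ 𝒞, C.Nonempty)
    (hnoiso : ∀ v : V, ∃ C ∈ 𝒞, v ∈ C) :
    (∃ G : MCM ({C // C ∈ 𝒞} ⊕ V), G.E = eccEdge 𝒞 ∧
      G.L = Set.range Sum.inl ∧ G.M = Set.range Sum.inr) ∧
    ∀ m m' : V, m ≠ m' →
      (DConn (eccEdge 𝒞) ∅ (Sum.inr m) (Sum.inr m') ↔ D.Adj m m') := by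
  constructor
  · refine ⟨⟨eccEdge 𝒞, Set.range Sum.inl, Set.range Sum.inr, ?_, ?_, ?_, ?_, ?_, ?_⟩,
      rfl, rfl, rfl⟩
    · rw [Set.disjoint_left]
      rintro _ ⟨C, rfl⟩ ⟨a, h⟩
      cases h
    · ext x
      cases x <;> simp
    · intro v h
      have hout : ∃ w, eccEdge 𝒞 v w := by
        obtain ⟨b, h1, -⟩ := Relation.TransGen.head'_iff.1 h
        exact ⟨b, h1⟩
      have hin : ∃ u, eccEdge 𝒞 u v := by
        cases h with
        | single h1 => exact ⟨v, h1⟩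
        | tail _ h1 => exact ⟨_, h1⟩
      cases v with
      | inl C => obtain ⟨u, hu⟩ := hin; exact ecc_no_in C u hu
      | inr a => obtain ⟨w, hw⟩ := hout; exact ecc_no_out a w hw
    · rintro _ ⟨a, rfl⟩ v
      exact ecc_no_out a v
    · rintro _ ⟨a, rfl⟩
      obtain ⟨C, hC, ha⟩ := hnoiso a
      exact ⟨Sum.inl ⟨C, hC⟩, ha⟩
    · rintro _ ⟨C, rfl⟩
      obtain ⟨a, ha⟩ := hnonempty C.1 C.2
      exact ⟨Sum.inr a, ha⟩
  · intro m m' hne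
    constructor
    · rintro ⟨p, hch, hnd, hhd, hlast, hnb⟩
      cases p with
      | nil => simp at hhd
      | cons a t =>
        obtain rfl : a = Sum.inr m := by simpa using hhd
        cases t with
        | nil =>
          simp at hlast
          exact absurd hlast hne
        | cons x t2 =>
          rw [List.Chain', List.isChain_cons_cons] at hch
          obtain ⟨hsk1, hch⟩ := hch
          have hx : eccEdge 𝒞 x (Sum.inr m) := by
            rcases hsk1 with h | h
            · exact absurd h (ecc_no_out m x)
            · exact h
          cases x with
          | inr b => exact hx.elim
          | inl C =>
            cases t2 with
            | nil => simp at hlast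
            | cons y t3 =>
              rw [List.isChain_cons_cons] at hch
              obtain ⟨hsk2, hch⟩ := hch
              have hy : eccEdge 𝒞 (Sum.inl C) y := by
                rcases hsk2 with h | h
                · exact h
                · exact absurd h (ecc_no_in C y)
              cases y with
              | inl C' => exact hy.elim
              | inr b =>
                cases t3 with
                | nil =>
                  have hb : b = m' := by simpa using hlast
                  have hm : m ∈ (C.1 : Set V) := hx
                  have hm' : m' ∈ (C.1 : Set V) := hb ▸ hy
                  exact hclique C.1 C.2 hm hm' hne
                | cons z t4 =>
                  rw [List.isChain_cons_cons] at hch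
                  obtain ⟨hsk3, _⟩ := hch
                  have hz : eccEdge 𝒞 z (Sum.inr b) := by
                    rcases hsk3 with h | h
                    · exact absurd h (ecc_no_out b z)
                    · exact h
                  cases z with
                  | inr c => exact hz.elim
                  | inl C' =>
                    exact (hnb ⟨Sum.inl C, Sum.inr b, Sum.inl C',
                      ⟨[Sum.inr m], t4, rfl⟩,
                      Or.inl ⟨hy, hz, fun d _ hd => Set.notMem_empty d hd⟩⟩).elim
    · intro hadj
      obtain ⟨C, hC, hm, hm'⟩ := hcover m m' hadj
      refine ⟨[Sum.inr m, Sum.inl ⟨C, hC⟩, Sum.inr m'], ?_, ?_, rfl, rfl, ?_⟩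
      · exact List.isChain_cons_cons.2 ⟨Or.inr hm, List.isChain_cons_cons.2
          ⟨Or.inl hm', List.isChain_singleton _⟩⟩
      · simp [hne]
      · rintro ⟨a, v, b, ⟨s, t, hst⟩, hcase⟩
        have hlen : s.length = 0 ∧ t.length = 0 := by
          have := congrArg List.length hst
          simp at this
          omega
        obtain ⟨hs, ht⟩ := hlen
        rw [List.length_eq_zero_iff] at hs ht
        subst hs; subst ht
        obtain ⟨rfl, rfl, rfl⟩ : a = Sum.inr m ∧ v = Sum.inl ⟨C, hC⟩ ∧ b = Sum.inr m' := by
          simpa using hst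
        rcases hcase with ⟨h1, _, _⟩ | ⟨_, hv⟩
        · exact ecc_no_out m _ h1
        · exact Set.notMem_empty _ hv
end

section
/- A finite simple graph on n vertices has at most 3^{n/3} maximal cliques. -/
open Finset

/-- `C` is a maximal clique of `G`. -/
def IsMaximalClique {V : Type*} (G : SimpleGraph V) (C : Finset V) : Prop :=
  G.IsClique (C : Set V) ∧ ∀ D : Finset V, G.IsClique (D : Set V) → C ⊆ D → C = D

lemma nat_cube_le_three_pow : ∀ k : ℕ, k ^ 3 ≤ 3 ^ k := by
  intro k
  induction k using Nat.strong_induction_on with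
  | _ k ih =>
    match k, ih with
    | 0, _ => decide
    | 1, _ => decide
    | 2, _ => decide
    | 3, _ => decide
    | (m+4), ih =>
      have h1 : (m+3) ^ 3 ≤ 3 ^ (m+3) := ih _ (by omega)
      have h2 : (m+4) ^ 3 ≤ 3 * (m+3) ^ 3 := by nlinarith [sq_nonneg m, Nat.zero_le m, Nat.zero_le (m^3)]
      calc (m+4) ^ 3 ≤ 3 * (m+3) ^ 3 := h2
        _ ≤ 3 * 3 ^ (m+3) := by omega
        _ = 3 ^ (m+4) := by ring

lemma cube_root_le {a b : ℝ} (ha : 0 ≤ a) (h : a ^ (3:ℕ) ≤ b) : a ≤ b ^ ((1:ℝ)/3) := by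
  have hb : (0:ℝ) ≤ b := le_trans (by positivity) h
  have : a = (a ^ (3:ℕ) : ℝ) ^ ((1:ℝ)/3) := by
    rw [← Real.rpow_natCast a 3, ← Real.rpow_mul ha]
    norm_num
  rw [this]
  exact Real.rpow_le_rpow (by positivity) h (by norm_num)

lemma three_rpow_eq (k : ℕ) : (3:ℝ) ^ ((k:ℝ)/3) = ((3:ℝ) ^ k) ^ ((1:ℝ)/3) := by
  rw [← Real.rpow_natCast 3 k, ← Real.rpow_mul (by norm_num)]
  ring_nf

lemma nat_le_three_rpow (k : ℕ) : (k:ℝ) ≤ (3:ℝ) ^ ((k:ℝ)/3) := by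
  rw [three_rpow_eq]
  apply cube_root_le (by positivity)
  have := nat_cube_le_three_pow k
  exact_mod_cast this

lemma three_rpow_mono {a b : ℝ} (h : a ≤ b) : (3:ℝ) ^ (a/3) ≤ (3:ℝ) ^ (b/3) :=
  Real.rpow_le_rpow_of_exponent_le (by norm_num) (by linarith)

section Graph
variable {V : Type*} [DecidableEq V] (G : SimpleGraph V)

/-- A maximal clique containing `u` restricts to a maximal clique of the induced
graph on the neighborhood of `u`. -/
lemma isMaximalClique_subtype {u : V} {C : Finset V} (hC : IsMaximalClique G C)
    (hu : u ∈ C) [DecidablePred (· ∈ G.neighborSet u)] :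
    IsMaximalClique (G.induce (G.neighborSet u)) (C.subtype (· ∈ G.neighborSet u)) := by
  constructor
  · intro x hx y hy hxy
    simp only [Finset.mem_coe, Finset.mem_subtype] at hx hy
    have : G.Adj x y := hC.1 hx hy (by simpa [Subtype.ext_iff] using hxy)
    simpa using this
  · intro D' hD' hsub
    set D : Finset V := insert u (D'.map (Function.Embedding.subtype _)) with hD
    have hmapD : ∀ x ∈ D'.map (Function.Embedding.subtype _), x ∈ G.neighborSet u := by
      intro x hx
      obtain ⟨x', _, rfl⟩ := Finset.mem_map.mp hx
      exact x'.2
    have hDclique : G.IsClique (D : Set V) := by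
      have hmap : G.IsClique ((D'.map (Function.Embedding.subtype _) : Finset V) : Set V) := by
        intro x hx y hy hxy
        simp only [Finset.coe_map, Set.mem_image, Finset.mem_coe] at hx hy
        obtain ⟨x', hx', rfl⟩ := hx
        obtain ⟨y', hy', rfl⟩ := hy
        have : (G.induce (G.neighborSet u)).Adj x' y' :=
          hD' hx' hy' (by simpa [Subtype.ext_iff] using hxy)
        simpa using this
      rw [hD, Finset.coe_insert]
      refine hmap.insert ?_
      intro b hb _
      exact (G.mem_neighborSet u b).mp (hmapD b hb)
    have hCD : C ⊆ D := by
      intro x hx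
      rcases eq_or_ne x u with rfl | hne
      · exact Finset.mem_insert_self _ _
      · have hadj : G.Adj u x := hC.1 hu hx (Ne.symm hne)
        have hxN : x ∈ G.neighborSet u := hadj
        refine Finset.mem_insert_of_mem ?_
        refine Finset.mem_map.mpr ⟨⟨x, hxN⟩, ?_, rfl⟩
        exact hsub (Finset.mem_subtype.mpr hx)
    have hCeq : C = D := hC.2 D hDclique hCD
    apply Finset.Subset.antisymm hsub
    intro x' hx'
    have hxD : (x' : V) ∈ D := by
      refine Finset.mem_insert_of_mem ?_
      exact Finset.mem_map.mpr ⟨x', hx', rfl⟩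
    rw [← hCeq] at hxD
    exact Finset.mem_subtype.mpr hxD

lemma maximalClique_eq_insert {u : V} {C : Finset V} (hC : IsMaximalClique G C)
    (hu : u ∈ C) [DecidablePred (· ∈ G.neighborSet u)] :
    C = insert u ((C.subtype (· ∈ G.neighborSet u)).map (Function.Embedding.subtype _)) := by
  rw [Finset.subtype_map]
  ext x
  simp only [Finset.mem_insert, Finset.mem_filter]
  constructor
  · intro hx
    rcases eq_or_ne x u with rfl | hne
    · exact Or.inl rfl
    · exact Or.inr ⟨hx, hC.1 hu hx (Ne.symm hne)⟩
  · rintro (rfl | ⟨hx, _⟩) <;> [exact hu; exact hx]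

end Graph

lemma moon_moser : ∀ (n : ℕ) (V : Type*) [Fintype V] [DecidableEq V] (G : SimpleGraph V),
    Fintype.card V = n →
    (Nat.card {C : Finset V // IsMaximalClique G C} : ℝ) ≤ (3 : ℝ) ^ ((n : ℝ) / 3) := by
  intro n
  induction n using Nat.strong_induction_on with
  | _ n ih =>
    intro V _ _ G hn
    classical
    rcases Nat.eq_zero_or_pos n with rfl | hpos
    · have : IsEmpty V := Fintype.card_eq_zero_iff.mp hn
      have hsub : Subsingleton {C : Finset V // IsMaximalClique G C} := by
        constructor
        rintro ⟨C, _⟩ ⟨D, _⟩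
        have : ∀ E : Finset V, E = ∅ := fun E => Finset.eq_empty_of_isEmpty E
        simp [Subtype.ext_iff, this C, this D]
      have hle : Nat.card {C : Finset V // IsMaximalClique G C} ≤ 1 := by
        rcases isEmpty_or_nonempty {C : Finset V // IsMaximalClique G C} with h | h
        · simp [Nat.card_of_isEmpty]
        · haveI : Unique {C : Finset V // IsMaximalClique G C} := uniqueOfSubsingleton h.some
          simp [Nat.card_unique]
      calc (Nat.card {C : Finset V // IsMaximalClique G C} : ℝ) ≤ 1 := by exact_mod_cast hle
        _ ≤ (3:ℝ) ^ (((0:ℕ):ℝ)/3) := by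
            simp
    · -- positive case
      have hne : Nonempty V := Fintype.card_pos_iff.mp (hn ▸ hpos)
      obtain ⟨v, -, hv⟩ := Finset.exists_max_image (Finset.univ : Finset V) (fun u => G.degree u)
        ⟨hne.some, Finset.mem_univ _⟩
      set d := G.degree v with hd
      set M : Finset V := Finset.univ \ G.neighborFinset v with hM
      have hdeg_lt : ∀ u : V, G.degree u < n := by
        intro u
        have hsub : G.neighborFinset u ⊆ Finset.univ.erase u := by
          intro x hx
          exact Finset.mem_erase.mpr ⟨((G.mem_neighborFinset u x).mp hx).ne', Finset.mem_univ x⟩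
        have h1 : G.degree u ≤ n - 1 := by
          have := Finset.card_le_card hsub
          rwa [Finset.card_erase_of_mem (Finset.mem_univ u), Finset.card_univ, hn,
            SimpleGraph.card_neighborFinset_eq_degree] at this
        omega
      have hdlt : d < n := hdeg_lt v
      have hMcard : M.card = n - d := by
        rw [hM, Finset.card_sdiff_of_subset (Finset.subset_univ _), Finset.card_univ, hn,
          SimpleGraph.card_neighborFinset_eq_degree]
      have hmeet : ∀ C : Finset V, IsMaximalClique G C → ∃ u ∈ M, u ∈ C := by
        intro C hC
        by_contra h
        push_neg at h
        have hsubN : ∀ x ∈ C, x ∈ G.neighborFinset v := by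
          intro x hx
          by_contra hx'
          exact h x (by simp [hM, hx']) hx
        have hvC : v ∉ C := by
          intro hvC
          exact ((G.mem_neighborFinset v v).mp (hsubN v hvC)).ne rfl
        have hclique : G.IsClique ((insert v C : Finset V) : Set V) := by
          rw [Finset.coe_insert]
          refine hC.1.insert ?_
          intro b hb _
          exact (G.mem_neighborFinset v b).mp (hsubN b (Finset.mem_coe.mp hb))
        have heq := hC.2 _ hclique (Finset.subset_insert _ _)
        exact hvC (heq ▸ Finset.mem_insert_self v C)
      have hcardT : Nat.card {C : Finset V // IsMaximalClique G C} =
          (Finset.univ.filter (IsMaximalClique G)).card := by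
        rw [Nat.card_eq_fintype_card, Fintype.card_subtype]
      have hcount : (Finset.univ.filter (IsMaximalClique G)).card ≤
          ∑ u ∈ M, (Finset.univ.filter (fun C => IsMaximalClique G C ∧ u ∈ C)).card := by
        refine le_trans (Finset.card_le_card ?_) Finset.card_biUnion_le
        intro C hC
        rw [Finset.mem_filter] at hC
        obtain ⟨u, hu, huC⟩ := hmeet C hC.2
        exact Finset.mem_biUnion.mpr ⟨u, hu, by simp [hC.2, huC]⟩
      have hu_bound : ∀ u ∈ M,
          ((Finset.univ.filter (fun C => IsMaximalClique G C ∧ u ∈ C)).card : ℝ) ≤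
            (3:ℝ) ^ ((d:ℝ)/3) := by
        intro u _
        have hinj : (Finset.univ.filter (fun C => IsMaximalClique G C ∧ u ∈ C)).card ≤
            (Finset.univ.filter (IsMaximalClique (G.induce (G.neighborSet u)))).card := by
          apply Finset.card_le_card_of_injOn (fun C => C.subtype (· ∈ G.neighborSet u))
          · intro C hC
            rw [Finset.mem_coe, Finset.mem_filter] at hC ⊢
            exact ⟨Finset.mem_univ _, isMaximalClique_subtype G hC.2.1 hC.2.2⟩
          · intro C hC C' hC' hEq
            rw [Finset.mem_coe, Finset.mem_filter] at hC hC'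
            rw [maximalClique_eq_insert G hC.2.1 hC.2.2,
              maximalClique_eq_insert G hC'.2.1 hC'.2.2]
            simp only at hEq
            rw [hEq]
        have hdegeq : Fintype.card (G.neighborSet u) = G.degree u := by
          rw [← SimpleGraph.card_neighborSet_eq_degree]
        have ih_u := ih (G.degree u) (hdeg_lt u) (G.neighborSet u)
          (G.induce (G.neighborSet u)) hdegeq
        have hcards : Nat.card {C : Finset (G.neighborSet u) //
            IsMaximalClique (G.induce (G.neighborSet u)) C} =
            (Finset.univ.filter (IsMaximalClique (G.induce (G.neighborSet u)))).card := by
          rw [Nat.card_eq_fintype_card, Fintype.card_subtype]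
        have hdu : G.degree u ≤ d := hv u (Finset.mem_univ u)
        calc ((Finset.univ.filter (fun C => IsMaximalClique G C ∧ u ∈ C)).card : ℝ)
            ≤ ((Finset.univ.filter (IsMaximalClique (G.induce (G.neighborSet u)))).card : ℝ) := by
              exact_mod_cast hinj
          _ = (Nat.card {C : Finset (G.neighborSet u) //
                IsMaximalClique (G.induce (G.neighborSet u)) C} : ℝ) := by rw [hcards]
          _ ≤ (3:ℝ) ^ ((G.degree u : ℝ)/3) := ih_u
          _ ≤ (3:ℝ) ^ ((d:ℝ)/3) := three_rpow_mono (by exact_mod_cast hdu)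
      calc (Nat.card {C : Finset V // IsMaximalClique G C} : ℝ)
          = ((Finset.univ.filter (IsMaximalClique G)).card : ℝ) := by rw [hcardT]
        _ ≤ ∑ u ∈ M, ((Finset.univ.filter (fun C => IsMaximalClique G C ∧ u ∈ C)).card : ℝ) := by
            exact_mod_cast hcount
        _ ≤ ∑ _u ∈ M, (3:ℝ) ^ ((d:ℝ)/3) := Finset.sum_le_sum hu_bound
        _ = (M.card : ℝ) * (3:ℝ) ^ ((d:ℝ)/3) := by rw [Finset.sum_const, nsmul_eq_mul]
        _ = (((n - d : ℕ)) : ℝ) * (3:ℝ) ^ ((d:ℝ)/3) := by rw [hMcard]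
        _ ≤ (3:ℝ) ^ (((n - d : ℕ) : ℝ)/3) * (3:ℝ) ^ ((d:ℝ)/3) :=
            mul_le_mul_of_nonneg_right (nat_le_three_rpow _) (by positivity)
        _ = (3:ℝ) ^ ((n:ℝ)/3) := by
            rw [← Real.rpow_add (by norm_num)]
            congr 1
            rw [Nat.cast_sub hdlt.le]
            ring

/-- Moon–Moser: a graph on `n` vertices has at most `3 ^ (n/3)` maximal cliques. -/
theorem card_maximalCliques_le {V : Type*} [Fintype V] [DecidableEq V]
    (G : SimpleGraph V) :
    (Nat.card {C : Finset V // IsMaximalClique G C} : ℝ) ≤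
      (3 : ℝ) ^ ((Fintype.card V : ℝ) / 3) :=
  moon_moser (Fintype.card V) V G rfl
end
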